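/- Let R = ℂ[x₁,x₂,x₃,u₀,u₁,u₂] and let I_B ⊂ R be the ideal generated by x₁u₁−x₂u₀, x₁u₂−x₂u₁, x₁²−x₃u₀, x₁x₂−x₃u₁, x₂²−x₃u₂ and u₀u₂−u₁². Then B = R/I_B is a normal integral domain, i.e. B is a domain that is integrally closed in its field of fractions. -/

import Mathlib

open MvPolynomial

/-- The ideal `I_B = (x₁u₁−x₂u₀, x₁u₂−x₂u₁, x₁²−x₃u₀, x₁x₂−x₃u₁, x₂²−x₃u₂, u₀u₂−u₁²)`
of `R = ℂ[x₁,x₂,x₃,u₀,u₁,u₂]`. Variables: `x₁ = X 0`, `x₂ = X 1`, `x₃ = X 2`,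
`u₀ = X 3`, `u₁ = X 4`, `u₂ = X 5`. -/
noncomputable def IB : Ideal (MvPolynomial (Fin 6) ℂ) :=
  Ideal.span {X 0 * X 4 - X 1 * X 3, X 0 * X 5 - X 1 * X 4,
    X 0 ^ 2 - X 2 * X 3, X 0 * X 1 - X 2 * X 4, X 1 ^ 2 - X 2 * X 5,
    X 3 * X 5 - X 4 ^ 2}

set_option maxRecDepth 4000

noncomputable abbrev P3 := MvPolynomial (Fin 3) ℂ
noncomputable abbrev R6 := MvPolynomial (Fin 6) ℂ

noncomputable def vv : Fin 6 → P3
  | 0 => X 0 * X 2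
  | 1 => X 1 * X 2
  | 2 => X 2 ^ 2
  | 3 => X 0 ^ 2
  | 4 => X 0 * X 1
  | 5 => X 1 ^ 2

noncomputable def φ : R6 →ₐ[ℂ] P3 := aeval vv

lemma IB_le_ker : IB ≤ RingHom.ker φ.toRingHom := by
  rw [IB, Ideal.span_le]
  rintro p (rfl | rfl | rfl | rfl | rfl | rfl) <;>
    · simp only [SetLike.mem_coe, RingHom.mem_ker, AlgHom.toRingHom_eq_coe,
        RingHom.coe_coe, map_sub, map_mul, map_pow, φ, aeval_X, vv]
      ring

noncomputable def qm : R6 →ₐ[ℂ] (R6 ⧸ IB) := Ideal.Quotient.mkₐ ℂ IB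

noncomputable def φb : (R6 ⧸ IB) →ₐ[ℂ] P3 :=
  Ideal.Quotient.liftₐ IB φ (fun a ha => IB_le_ker ha)

@[simp] lemma φb_qm (r : R6) : φb (qm r) = φ r := by
  simp [φb, qm, Ideal.Quotient.liftₐ_apply, Ideal.Quotient.mkₐ_eq_mk]
  rfl

/-- standard exponents -/
def std (e : Fin 6 →₀ ℕ) : Prop :=
  e 0 ≤ 1 ∧ e 1 ≤ 1 ∧ e 4 ≤ 1 ∧ (e 0 = 1 → e 1 = 0 ∧ e 4 = 0 ∧ e 5 = 0)

/-- measure -/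
def μm (e : Fin 6 →₀ ℕ) : ℕ := 10 * e 0 + 6 * e 1 + 3 * e 4 + 5 * e 5

open Finsupp in
lemma qm_mul_congr {p r : R6} (h : p - r ∈ IB) (m : R6) : qm (p * m) = qm (r * m) := by
  have h2 : p * m - r * m ∈ IB := by
    have := Ideal.mul_mem_right m _ h; rwa [sub_mul] at this
  have h3 : Ideal.Quotient.mk IB (p * m) = Ideal.Quotient.mk IB (r * m) :=
    Ideal.Quotient.eq.mpr h2
  simp only [qm, Ideal.Quotient.mkₐ_eq_mk]
  exact h3

open Finsupp in
lemma XX_mul_monomial (i j : Fin 6) (d : Fin 6 →₀ ℕ) :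
    (X i * X j : R6) * monomial d 1 = monomial (single i 1 + single j 1 + d) 1 := by
  simp [X, monomial_mul]

open Finsupp in
lemma step (i j k l : Fin 6) (h : (X i * X j : R6) - X k * X l ∈ IB)
    (e : Fin 6 →₀ ℕ) (hle : single i 1 + single j 1 ≤ e) :
    qm (monomial e 1) =
      qm (monomial (e - (single i 1 + single j 1) + (single k 1 + single l 1)) 1) := by
  have he : monomial e (1:ℂ) = (X i * X j) * monomial (e - (single i 1 + single j 1)) 1 := by
    rw [XX_mul_monomial, add_tsub_cancel_of_le hle]
  rw [he, qm_mul_congr h, XX_mul_monomial, add_comm]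

lemma g1 : (X 0 * X 4 : R6) - X 1 * X 3 ∈ IB := Ideal.subset_span (by simp)
lemma g2 : (X 0 * X 5 : R6) - X 1 * X 4 ∈ IB := Ideal.subset_span (by simp)
lemma g3 : (X 0 * X 0 : R6) - X 2 * X 3 ∈ IB := by
  have : (X 0 ^ 2 : R6) - X 2 * X 3 ∈ IB := Ideal.subset_span (by simp)
  rwa [pow_two] at this
lemma g4 : (X 0 * X 1 : R6) - X 2 * X 4 ∈ IB := Ideal.subset_span (by simp)
lemma g5 : (X 1 * X 1 : R6) - X 2 * X 5 ∈ IB := by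
  have : (X 1 ^ 2 : R6) - X 2 * X 5 ∈ IB := Ideal.subset_span (by simp)
  rwa [pow_two] at this
lemma g6 : (X 4 * X 4 : R6) - X 3 * X 5 ∈ IB := by
  have : (X 3 * X 5 : R6) - X 4 ^ 2 ∈ IB := Ideal.subset_span (by simp)
  have h2 := neg_mem this
  rw [neg_sub, pow_two] at h2; exact h2

noncomputable def Mspan : Submodule ℂ (R6 ⧸ IB) :=
  Submodule.span ℂ (⇑qm '' {p | ∃ e, std e ∧ p = monomial e 1})

open Finsupp in
lemma mono_mem_aux : ∀ n (e : Fin 6 →₀ ℕ), μm e ≤ n → qm (monomial e 1) ∈ Mspan := by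
  intro n
  induction n with
  | zero =>
    intro e he
    have hstd : std e := by
      simp only [μm] at he
      refine ⟨by omega, by omega, by omega, fun _ => ⟨by omega, by omega, by omega⟩⟩
    exact Submodule.subset_span ⟨monomial e 1, ⟨e, hstd, rfl⟩, rfl⟩
  | succ n ih =>
    intro e he
    by_cases hstd : std e
    · exact Submodule.subset_span ⟨monomial e 1, ⟨e, hstd, rfl⟩, rfl⟩
    · simp only [std] at hstd
      push_neg at hstd
      have hcase : 2 ≤ e 0 ∨ (1 ≤ e 0 ∧ 1 ≤ e 1) ∨ 2 ≤ e 1 ∨ (1 ≤ e 0 ∧ 1 ≤ e 4) ∨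
          (1 ≤ e 0 ∧ 1 ≤ e 5) ∨ 2 ≤ e 4 := by omega
      rcases hcase with h | h | h | h | h | h
      · -- x₁² → x₃ u₀  : i=j=0, k=2, l=3
        rw [step 0 0 2 3 g3 e (by intro t; fin_cases t <;> simp [single_apply] <;> omega)]
        apply ih
        have hb : μm e ≤ n + 1 := he
        simp only [μm, Finsupp.coe_add, Finsupp.coe_tsub, Pi.add_apply, Pi.sub_apply] at hb ⊢
        simp only [Finsupp.single_eq_same, ne_eq, OfNat.ofNat_ne_zero,
          not_false_eq_true, Finsupp.single_eq_of_ne, Finsupp.single_eq_of_ne', show ((0:Fin 6) ≠ 1) by decide,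
          show ((0:Fin 6) ≠ 4) by decide, show ((0:Fin 6) ≠ 5) by decide,
          show ((1:Fin 6) ≠ 0) by decide, show ((1:Fin 6) ≠ 4) by decide,
          show ((1:Fin 6) ≠ 5) by decide, show ((2:Fin 6) ≠ 0) by decide,
          show ((2:Fin 6) ≠ 1) by decide, show ((2:Fin 6) ≠ 4) by decide,
          show ((2:Fin 6) ≠ 5) by decide, show ((3:Fin 6) ≠ 0) by decide,
          show ((3:Fin 6) ≠ 1) by decide, show ((3:Fin 6) ≠ 4) by decide,
          show ((3:Fin 6) ≠ 5) by decide, show ((4:Fin 6) ≠ 0) by decide,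
          show ((4:Fin 6) ≠ 1) by decide, show ((4:Fin 6) ≠ 5) by decide,
          show ((5:Fin 6) ≠ 0) by decide, show ((5:Fin 6) ≠ 1) by decide,
          show ((5:Fin 6) ≠ 4) by decide] at hb ⊢
        omega
      · rw [step 0 1 2 4 g4 e (by intro t; fin_cases t <;> simp [single_apply] <;> omega)]
        apply ih
        have hb : μm e ≤ n + 1 := he
        simp only [μm, Finsupp.coe_add, Finsupp.coe_tsub, Pi.add_apply, Pi.sub_apply] at hb ⊢
        simp only [Finsupp.single_eq_same, ne_eq, OfNat.ofNat_ne_zero,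
          not_false_eq_true, Finsupp.single_eq_of_ne, Finsupp.single_eq_of_ne', show ((0:Fin 6) ≠ 1) by decide,
          show ((0:Fin 6) ≠ 4) by decide, show ((0:Fin 6) ≠ 5) by decide,
          show ((1:Fin 6) ≠ 0) by decide, show ((1:Fin 6) ≠ 4) by decide,
          show ((1:Fin 6) ≠ 5) by decide, show ((2:Fin 6) ≠ 0) by decide,
          show ((2:Fin 6) ≠ 1) by decide, show ((2:Fin 6) ≠ 4) by decide,
          show ((2:Fin 6) ≠ 5) by decide, show ((3:Fin 6) ≠ 0) by decide,
          show ((3:Fin 6) ≠ 1) by decide, show ((3:Fin 6) ≠ 4) by decide,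
          show ((3:Fin 6) ≠ 5) by decide, show ((4:Fin 6) ≠ 0) by decide,
          show ((4:Fin 6) ≠ 1) by decide, show ((4:Fin 6) ≠ 5) by decide,
          show ((5:Fin 6) ≠ 0) by decide, show ((5:Fin 6) ≠ 1) by decide,
          show ((5:Fin 6) ≠ 4) by decide] at hb ⊢
        omega
      · rw [step 1 1 2 5 g5 e (by intro t; fin_cases t <;> simp [single_apply] <;> omega)]
        apply ih
        have hb : μm e ≤ n + 1 := he
        simp only [μm, Finsupp.coe_add, Finsupp.coe_tsub, Pi.add_apply, Pi.sub_apply] at hb ⊢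
        simp only [Finsupp.single_eq_same, ne_eq, OfNat.ofNat_ne_zero,
          not_false_eq_true, Finsupp.single_eq_of_ne, Finsupp.single_eq_of_ne', show ((0:Fin 6) ≠ 1) by decide,
          show ((0:Fin 6) ≠ 4) by decide, show ((0:Fin 6) ≠ 5) by decide,
          show ((1:Fin 6) ≠ 0) by decide, show ((1:Fin 6) ≠ 4) by decide,
          show ((1:Fin 6) ≠ 5) by decide, show ((2:Fin 6) ≠ 0) by decide,
          show ((2:Fin 6) ≠ 1) by decide, show ((2:Fin 6) ≠ 4) by decide,
          show ((2:Fin 6) ≠ 5) by decide, show ((3:Fin 6) ≠ 0) by decide,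
          show ((3:Fin 6) ≠ 1) by decide, show ((3:Fin 6) ≠ 4) by decide,
          show ((3:Fin 6) ≠ 5) by decide, show ((4:Fin 6) ≠ 0) by decide,
          show ((4:Fin 6) ≠ 1) by decide, show ((4:Fin 6) ≠ 5) by decide,
          show ((5:Fin 6) ≠ 0) by decide, show ((5:Fin 6) ≠ 1) by decide,
          show ((5:Fin 6) ≠ 4) by decide] at hb ⊢
        omega
      · rw [step 0 4 1 3 g1 e (by intro t; fin_cases t <;> simp [single_apply] <;> omega)]
        apply ih
        have hb : μm e ≤ n + 1 := he
        simp only [μm, Finsupp.coe_add, Finsupp.coe_tsub, Pi.add_apply, Pi.sub_apply] at hb ⊢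
        simp only [Finsupp.single_eq_same, ne_eq, OfNat.ofNat_ne_zero,
          not_false_eq_true, Finsupp.single_eq_of_ne, Finsupp.single_eq_of_ne', show ((0:Fin 6) ≠ 1) by decide,
          show ((0:Fin 6) ≠ 4) by decide, show ((0:Fin 6) ≠ 5) by decide,
          show ((1:Fin 6) ≠ 0) by decide, show ((1:Fin 6) ≠ 4) by decide,
          show ((1:Fin 6) ≠ 5) by decide, show ((2:Fin 6) ≠ 0) by decide,
          show ((2:Fin 6) ≠ 1) by decide, show ((2:Fin 6) ≠ 4) by decide,
          show ((2:Fin 6) ≠ 5) by decide, show ((3:Fin 6) ≠ 0) by decide,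
          show ((3:Fin 6) ≠ 1) by decide, show ((3:Fin 6) ≠ 4) by decide,
          show ((3:Fin 6) ≠ 5) by decide, show ((4:Fin 6) ≠ 0) by decide,
          show ((4:Fin 6) ≠ 1) by decide, show ((4:Fin 6) ≠ 5) by decide,
          show ((5:Fin 6) ≠ 0) by decide, show ((5:Fin 6) ≠ 1) by decide,
          show ((5:Fin 6) ≠ 4) by decide] at hb ⊢
        omega
      · rw [step 0 5 1 4 g2 e (by intro t; fin_cases t <;> simp [single_apply] <;> omega)]
        apply ih
        have hb : μm e ≤ n + 1 := he
        simp only [μm, Finsupp.coe_add, Finsupp.coe_tsub, Pi.add_apply, Pi.sub_apply] at hb ⊢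
        simp only [Finsupp.single_eq_same, ne_eq, OfNat.ofNat_ne_zero,
          not_false_eq_true, Finsupp.single_eq_of_ne, show ((0:Fin 6) ≠ 1) by decide,
          show ((0:Fin 6) ≠ 4) by decide, show ((0:Fin 6) ≠ 5) by decide,
          show ((1:Fin 6) ≠ 0) by decide, show ((1:Fin 6) ≠ 4) by decide,
          show ((1:Fin 6) ≠ 5) by decide, show ((2:Fin 6) ≠ 0) by decide,
          show ((2:Fin 6) ≠ 1) by decide, show ((2:Fin 6) ≠ 4) by decide,
          show ((2:Fin 6) ≠ 5) by decide, show ((3:Fin 6) ≠ 0) by decide,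
          show ((3:Fin 6) ≠ 1) by decide, show ((3:Fin 6) ≠ 4) by decide,
          show ((3:Fin 6) ≠ 5) by decide, show ((4:Fin 6) ≠ 0) by decide,
          show ((4:Fin 6) ≠ 1) by decide, show ((4:Fin 6) ≠ 5) by decide,
          show ((5:Fin 6) ≠ 0) by decide, show ((5:Fin 6) ≠ 1) by decide,
          show ((5:Fin 6) ≠ 4) by decide] at hb ⊢
        omega
      · rw [step 4 4 3 5 g6 e (by intro t; fin_cases t <;> simp [single_apply] <;> omega)]
        apply ih
        have hb : μm e ≤ n + 1 := he
        simp only [μm, Finsupp.coe_add, Finsupp.coe_tsub, Pi.add_apply, Pi.sub_apply] at hb ⊢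
        simp only [Finsupp.single_eq_same, ne_eq, OfNat.ofNat_ne_zero,
          not_false_eq_true, Finsupp.single_eq_of_ne, Finsupp.single_eq_of_ne', show ((0:Fin 6) ≠ 1) by decide,
          show ((0:Fin 6) ≠ 4) by decide, show ((0:Fin 6) ≠ 5) by decide,
          show ((1:Fin 6) ≠ 0) by decide, show ((1:Fin 6) ≠ 4) by decide,
          show ((1:Fin 6) ≠ 5) by decide, show ((2:Fin 6) ≠ 0) by decide,
          show ((2:Fin 6) ≠ 1) by decide, show ((2:Fin 6) ≠ 4) by decide,
          show ((2:Fin 6) ≠ 5) by decide, show ((3:Fin 6) ≠ 0) by decide,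
          show ((3:Fin 6) ≠ 1) by decide, show ((3:Fin 6) ≠ 4) by decide,
          show ((3:Fin 6) ≠ 5) by decide, show ((4:Fin 6) ≠ 0) by decide,
          show ((4:Fin 6) ≠ 1) by decide, show ((4:Fin 6) ≠ 5) by decide,
          show ((5:Fin 6) ≠ 0) by decide, show ((5:Fin 6) ≠ 1) by decide,
          show ((5:Fin 6) ≠ 4) by decide] at hb ⊢
        omega

lemma mem_Mspan (z : R6 ⧸ IB) : z ∈ Mspan := by
  obtain ⟨r, rfl⟩ := Ideal.Quotient.mkₐ_surjective ℂ IB z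
  show qm r ∈ Mspan
  rw [MvPolynomial.as_sum r, map_sum]
  refine Submodule.sum_mem _ fun v hv => ?_
  have : monomial v (coeff v r) = coeff v r • monomial v 1 := by
    rw [MvPolynomial.smul_monomial, smul_eq_mul, mul_one]
  rw [this, map_smul]
  exact Submodule.smul_mem _ _ (mono_mem_aux (μm v) v le_rfl)

open Finsupp in
/-- exponent of `φ (monomial e 1)` -/
noncomputable def ψe (e : Fin 6 →₀ ℕ) : Fin 3 →₀ ℕ :=
  single 0 (2 * e 3 + e 4 + e 0) + single 1 (e 1 + e 4 + 2 * e 5) +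
    single 2 (e 0 + e 1 + 2 * e 2)

open Finsupp in
/-- left inverse of ψe on standard exponents -/
noncomputable def invE (f : Fin 3 →₀ ℕ) : Fin 6 →₀ ℕ :=
  if f 1 = 0 ∧ f 0 % 2 = 1 then
    single 0 1 + single 2 ((f 2 - 1) / 2) + single 3 ((f 0 - 1) / 2)
  else
    single 1 (f 2 % 2) + single 2 (f 2 / 2) + single 3 (f 0 / 2) + single 4 (f 0 % 2) +
      single 5 ((f 1 - f 2 % 2 - f 0 % 2) / 2)

open Finsupp in
lemma phi_monomial (e : Fin 6 →₀ ℕ) : φ (monomial e 1) = monomial (ψe e) 1 := by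
  rw [MvPolynomial.monomial_eq, MvPolynomial.monomial_eq]
  rw [Finsupp.prod_pow, Finsupp.prod_pow]
  simp only [map_one, C_1, one_mul]
  rw [map_prod]
  rw [Fin.prod_univ_six, Fin.prod_univ_three]
  simp only [map_pow, φ, aeval_X, vv, ψe]
  simp only [Finsupp.coe_add, Pi.add_apply]
  simp only [Finsupp.single_eq_same, ne_eq,
    show ((0:Fin 3) ≠ 1) by decide, show ((0:Fin 3) ≠ 2) by decide,
    show ((1:Fin 3) ≠ 0) by decide, show ((1:Fin 3) ≠ 2) by decide,
    show ((2:Fin 3) ≠ 0) by decide, show ((2:Fin 3) ≠ 1) by decide,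
    not_false_eq_true, Finsupp.single_eq_of_ne]
  ring

open Finsupp in
lemma ψe_apply0 (e : Fin 6 →₀ ℕ) : ψe e 0 = 2 * e 3 + e 4 + e 0 := by
  simp only [ψe, Finsupp.coe_add, Pi.add_apply, Finsupp.single_eq_same, ne_eq,
    show ((1:Fin 3) ≠ 0) by decide, show ((2:Fin 3) ≠ 0) by decide,
    not_false_eq_true, Finsupp.single_eq_of_ne, Finsupp.single_eq_of_ne', add_zero]

open Finsupp in
lemma ψe_apply1 (e : Fin 6 →₀ ℕ) : ψe e 1 = e 1 + e 4 + 2 * e 5 := by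
  simp only [ψe, Finsupp.coe_add, Pi.add_apply, Finsupp.single_eq_same, ne_eq,
    show ((0:Fin 3) ≠ 1) by decide, show ((2:Fin 3) ≠ 1) by decide,
    not_false_eq_true, Finsupp.single_eq_of_ne, Finsupp.single_eq_of_ne', add_zero, zero_add]

open Finsupp in
lemma ψe_apply2 (e : Fin 6 →₀ ℕ) : ψe e 2 = e 0 + e 1 + 2 * e 2 := by
  simp only [ψe, Finsupp.coe_add, Pi.add_apply, Finsupp.single_eq_same, ne_eq,
    show ((0:Fin 3) ≠ 2) by decide, show ((1:Fin 3) ≠ 2) by decide,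
    not_false_eq_true, Finsupp.single_eq_of_ne, Finsupp.single_eq_of_ne', zero_add]

open Finsupp in
lemma invE_ψe {e : Fin 6 →₀ ℕ} (h : std e) : invE (ψe e) = e := by
  obtain ⟨h0, h1, h4, himp⟩ := h
  rw [invE, ψe_apply0, ψe_apply1, ψe_apply2]
  ext t
  fin_cases t <;>
  · split_ifs with hc <;>
    · simp
      omega

noncomputable def Lmap : P3 →ₗ[ℂ] (R6 ⧸ IB) :=
  (MvPolynomial.basisMonomials (Fin 3) ℂ).constr ℂ (fun f => qm (monomial (invE f) 1))

lemma Lmap_monomial (f : Fin 3 →₀ ℕ) :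
    Lmap (monomial f 1) = qm (monomial (invE f) 1) := by
  have h : (monomial f (1:ℂ)) = (MvPolynomial.basisMonomials (Fin 3) ℂ) f := by
    rw [MvPolynomial.coe_basisMonomials]
  rw [h, Lmap, Module.Basis.constr_basis]

lemma L_phi (z : R6 ⧸ IB) : Lmap (φb z) = z := by
  have hz := mem_Mspan z
  induction hz using Submodule.span_induction with
  | mem x hx =>
    obtain ⟨p, ⟨e, he, rfl⟩, rfl⟩ := hx
    rw [φb_qm, phi_monomial, Lmap_monomial, invE_ψe he]
  | zero => simp
  | add x y _ _ hx hy => rw [map_add, map_add, hx, hy]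
  | smul c x _ hx => rw [map_smul, map_smul, hx]

lemma φb_injective : Function.Injective φb := by
  intro a b hab
  rw [← L_phi a, hab, L_phi b]

lemma domainQ : IsDomain (R6 ⧸ IB) :=
  Function.Injective.isDomain φb.toRingHom φb_injective

noncomputable def σ3 : P3 →ₐ[ℂ] P3 := aeval (fun i => - X i)

lemma σ3_phi (r : R6) : σ3 (φ r) = φ r := by
  have h : σ3.comp φ = φ := by
    apply MvPolynomial.algHom_ext
    intro i
    fin_cases i <;>
      · simp only [AlgHom.comp_apply, φ, aeval_X, vv, σ3, map_mul, map_pow, map_neg]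
        ring
  exact AlgHom.congr_fun h r

lemma σ3_monomial (f : Fin 3 →₀ ℕ) (c : ℂ) :
    σ3 (monomial f c) = (-1:ℂ) ^ (f 0 + f 1 + f 2) • monomial f c := by
  have hC : σ3 (C c) = C c := by simp [σ3]
  have h0 : σ3 (X 0) = -X 0 := aeval_X _ 0
  have h1 : σ3 (X 1) = -X 1 := aeval_X _ 1
  have h2 : σ3 (X 2) = -X 2 := aeval_X _ 2
  have hCn : (C ((-1:ℂ) ^ (f 0 + f 1 + f 2)) : P3) = (-1:P3) ^ (f 0 + f 1 + f 2) := by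
    rw [map_pow, map_neg, map_one]
  rw [MvPolynomial.smul_eq_C_mul, MvPolynomial.monomial_eq, Finsupp.prod_pow,
    Fin.prod_univ_three, map_mul, map_mul, map_mul, map_pow, map_pow, map_pow,
    hC, h0, h1, h2, hCn, neg_pow, neg_pow, neg_pow, pow_add, pow_add]
  ring

lemma σ3_as_sum (p : P3) :
    σ3 p = ∑ g ∈ p.support, ((-1:ℂ) ^ (g 0 + g 1 + g 2)) • monomial g (coeff g p) := by
  conv_lhs => rw [MvPolynomial.as_sum p, map_sum]
  exact Finset.sum_congr rfl fun g _ => σ3_monomial g (coeff g p)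

lemma even_of_fixed {p : P3} (hp : σ3 p = p) (f : Fin 3 →₀ ℕ)
    (hodd : (f 0 + f 1 + f 2) % 2 = 1) : coeff f p = 0 := by
  have h1 : coeff f (σ3 p) = (-1:ℂ) ^ (f 0 + f 1 + f 2) * coeff f p := by
    rw [σ3_as_sum, MvPolynomial.coeff_sum]
    simp only [MvPolynomial.coeff_smul, MvPolynomial.coeff_monomial, smul_eq_mul,
      mul_ite, mul_zero]
    rw [Finset.sum_ite_eq' p.support f fun g => (-1:ℂ) ^ (g 0 + g 1 + g 2) * coeff g p]
    by_cases hf : f ∈ p.support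
    · rw [if_pos hf]
    · rw [if_neg hf]
      rw [MvPolynomial.notMem_support_iff.mp hf, mul_zero]
  rw [hp] at h1
  have hneg : (-1:ℂ) ^ (f 0 + f 1 + f 2) = -1 := Odd.neg_one_pow (Nat.odd_iff.mpr hodd)
  rw [hneg, neg_one_mul] at h1
  have h2 : 2 * coeff f p = 0 := by linear_combination h1
  have := mul_eq_zero.mp h2
  simpa using this

lemma even_of_fixed' {p : P3} (hp : σ3 p = p) (f : Fin 3 →₀ ℕ) (hf : f ∈ p.support) :
    (f 0 + f 1 + f 2) % 2 = 0 := by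
  by_contra h
  have hodd : (f 0 + f 1 + f 2) % 2 = 1 := by omega
  exact MvPolynomial.mem_support_iff.mp hf (even_of_fixed hp f hodd)

open Finsupp in
lemma mono_split (f g : Fin 3 →₀ ℕ) (h : g ≤ f) :
    monomial f (1:ℂ) = monomial (f - g) 1 * monomial g 1 := by
  rw [monomial_mul, one_mul, tsub_add_cancel_of_le h]

open Finsupp in
lemma X_mul_X (i j : Fin 3) :
    (X i * X j : P3) = monomial (single i 1 + single j 1) 1 := by
  rw [X, X, monomial_mul, one_mul]

open Finsupp in
lemma even_mono_mem : ∀ (n : ℕ) (f : Fin 3 →₀ ℕ), f 0 + f 1 + f 2 = n → n % 2 = 0 →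
    monomial f (1:ℂ) ∈ φ.range := by
  intro n
  induction n using Nat.strong_induction_on with
  | _ n ih =>
    intro f hf hev
    by_cases h0 : 2 ≤ f 0
    · rw [mono_split f (single 0 2) (by intro t; fin_cases t <;> simp <;> omega)]
      refine mul_mem (ih (n-2) (by omega) _ ?_ (by omega))
        ⟨X 3, by simp [φ, vv, X_pow_eq_monomial]⟩
      simp only [coe_tsub, Pi.sub_apply, single_eq_same, ne_eq,
        show ((0:Fin 3) ≠ 1) by decide, show ((0:Fin 3) ≠ 2) by decide,
        show ((1:Fin 3) ≠ 0) by decide, show ((1:Fin 3) ≠ 2) by decide,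
        show ((2:Fin 3) ≠ 0) by decide, show ((2:Fin 3) ≠ 1) by decide,
        not_false_eq_true, single_eq_of_ne]
      omega
    · by_cases h1 : 2 ≤ f 1
      · rw [mono_split f (single 1 2) (by intro t; fin_cases t <;> simp <;> omega)]
        refine mul_mem (ih (n-2) (by omega) _ ?_ (by omega))
          ⟨X 5, by simp [φ, vv, X_pow_eq_monomial]⟩
        simp only [coe_tsub, Pi.sub_apply, single_eq_same, ne_eq,
        show ((0:Fin 3) ≠ 1) by decide, show ((0:Fin 3) ≠ 2) by decide,
        show ((1:Fin 3) ≠ 0) by decide, show ((1:Fin 3) ≠ 2) by decide,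
        show ((2:Fin 3) ≠ 0) by decide, show ((2:Fin 3) ≠ 1) by decide,
        not_false_eq_true, single_eq_of_ne]
        omega
      · by_cases h2 : 2 ≤ f 2
        · rw [mono_split f (single 2 2) (by intro t; fin_cases t <;> simp <;> omega)]
          refine mul_mem (ih (n-2) (by omega) _ ?_ (by omega))
            ⟨X 2, by simp [φ, vv, X_pow_eq_monomial]⟩
          simp only [coe_tsub, Pi.sub_apply, single_eq_same, ne_eq,
        show ((0:Fin 3) ≠ 1) by decide, show ((0:Fin 3) ≠ 2) by decide,
        show ((1:Fin 3) ≠ 0) by decide, show ((1:Fin 3) ≠ 2) by decide,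
        show ((2:Fin 3) ≠ 0) by decide, show ((2:Fin 3) ≠ 1) by decide,
        not_false_eq_true, single_eq_of_ne]
          omega
        · have hrep : f = single 0 (f 0) + single 1 (f 1) + single 2 (f 2) := by
            ext t; fin_cases t <;> simp
          have c0 : f 0 = 0 ∨ f 0 = 1 := by omega
          have c1 : f 1 = 0 ∨ f 1 = 1 := by omega
          have c2 : f 2 = 0 ∨ f 2 = 1 := by omega
          rcases c0 with c0 | c0 <;> rcases c1 with c1 | c1 <;> rcases c2 with c2 | c2 <;>
            rw [hrep, c0, c1, c2] <;> (try simp only [single_zero, add_zero, zero_add])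
          · simpa using one_mem φ.range
          · exact absurd (hf ▸ hev) (by omega)
          · exact absurd (hf ▸ hev) (by omega)
          · exact ⟨X 1, by rw [← X_mul_X 1 2]; simp [φ, vv]⟩
          · exact absurd (hf ▸ hev) (by omega)
          · exact ⟨X 0, by rw [← X_mul_X 0 2]; simp [φ, vv]⟩
          · exact ⟨X 4, by rw [← X_mul_X 0 1]; simp [φ, vv]⟩
          · exact absurd (hf ▸ hev) (by omega)

lemma fixed_mem_range {p : P3} (hp : σ3 p = p) : p ∈ φ.range := by
  rw [MvPolynomial.as_sum p]
  refine Submodule.sum_mem (Subalgebra.toSubmodule φ.range) fun f hf => ?_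
  have h : monomial f (coeff f p) = coeff f p • monomial f 1 := by
    rw [MvPolynomial.smul_monomial, smul_eq_mul, mul_one]
  rw [h]
  exact Submodule.smul_mem _ _
    (even_mono_mem (f 0 + f 1 + f 2) f rfl (even_of_fixed' hp f hf))

set_option synthInstance.maxHeartbeats 1000000 in
lemma P3_icl : IsIntegrallyClosed P3 := inferInstance

lemma hσφ (z : R6 ⧸ IB) : σ3 (φb z) = φb z := by
  obtain ⟨r, rfl⟩ := Ideal.Quotient.mkₐ_surjective ℂ IB z
  show σ3 (φb (qm r)) = φb (qm r)
  rw [φb_qm]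
  exact σ3_phi r

set_option maxHeartbeats 2000000 in
set_option synthInstance.maxHeartbeats 1000000 in
set_option maxHeartbeats 1000000 in
lemma iclQ : IsIntegrallyClosed (R6 ⧸ IB) := by
  haveI := domainQ
  haveI := P3_icl
  let K := FractionRing (R6 ⧸ IB)
  let L := FractionRing P3
  rw [isIntegrallyClosed_iff K]
  intro x hx
  have hg : Function.Injective ((algebraMap P3 L).comp φb.toRingHom) :=
    (IsFractionRing.injective P3 L).comp φb_injective
  set lf : K →+* L := IsFractionRing.lift hg with hlf_def
  have hcomp : ∀ z : R6 ⧸ IB, lf (algebraMap (R6 ⧸ IB) K z) = algebraMap P3 L (φb z) :=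
    fun z => IsFractionRing.lift_algebraMap hg z
  have hcomp' : (algebraMap P3 L).comp φb.toRingHom = lf.comp (algebraMap (R6 ⧸ IB) K) :=
    RingHom.ext fun z => (hcomp z).symm
  obtain ⟨pl, hmon, hev⟩ := hx
  have hint : IsIntegral P3 (lf x) := by
    refine ⟨pl.map φb.toRingHom, hmon.map _, ?_⟩
    rw [Polynomial.eval₂_map, hcomp', ← Polynomial.hom_eval₂, hev, map_zero]
  obtain ⟨pp, hpp⟩ := IsIntegrallyClosed.isIntegral_iff.mp hint
  obtain ⟨⟨a, b⟩, rfl⟩ := IsLocalization.mk'_surjective (nonZeroDivisors (R6 ⧸ IB)) x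
  have hmk : IsLocalization.mk' K a b * algebraMap (R6 ⧸ IB) K (b : R6 ⧸ IB)
      = algebraMap (R6 ⧸ IB) K a := IsLocalization.mk'_spec K a b
  have hkey : pp * φb (b : R6 ⧸ IB) = φb a := by
    apply IsFractionRing.injective P3 L
    have h2 := congrArg lf hmk
    rw [map_mul, hcomp, hcomp] at h2
    rw [map_mul, hpp]
    exact h2
  have hbne : φb (b : R6 ⧸ IB) ≠ 0 := by
    intro h
    have hb0 : (b : R6 ⧸ IB) ≠ 0 := nonZeroDivisors.ne_zero b.2
    exact hb0 (φb_injective (by rw [h, map_zero]))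
  have hσ : σ3 pp = pp := by
    have h1 := congrArg σ3 hkey
    rw [map_mul, hσφ, hσφ] at h1
    exact mul_right_cancel₀ hbne (h1.trans hkey.symm)
  obtain ⟨r, hr⟩ := (AlgHom.mem_range φ).mp (fixed_mem_range hσ)
  refine ⟨qm r, ?_⟩
  apply lf.injective
  rw [hcomp]
  show algebraMap P3 L (φb (qm r)) = lf (IsLocalization.mk' K a b)
  rw [φb_qm, hr, hpp]


/-- `B = R/I_B` is a normal integral domain: a domain integrally closed in its
field of fractions. -/
theorem stmt6 :
    IsDomain (MvPolynomial (Fin 6) ℂ ⧸ IB) ∧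
      IsIntegrallyClosed (MvPolynomial (Fin 6) ℂ ⧸ IB) := by
  exact ⟨domainQ, iclQ⟩
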